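/- arXiv:2307.07806 — 8 statements merged into one kernel-verified Lean document; each statement's English description precedes it below -/
import Mathlib

section
/- Let n,K ≥ 1, let z_1,…,z_K ∈ ℂ with |z_k| = 1, let b ∈ ℝ^K with b_k ≥ 0, and let φ ∈ ℂ^K. Define x ∈ ℂ^{2n−1} by x_j = Σ_{k=1}^K b_k φ_k z_k^{j−1} and t ∈ ℂ^n by t_j = Σ_{k=1}^K b_k z_k^{j−1}. Then the 2n×2n block matrix 𝓜(x,t) equals the product [[conj(V), 0],[0, V]] · [[diag(b), diag(b_k conj(φ_k))],[diag(b_k φ_k), diag(b)]] · [[conj(V), 0],[0, V]]^H, where conj(V) is the entrywise conjugate of V. -/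
open Matrix
open scoped ComplexOrder

/-- The Hankel operator: maps `x ∈ ℂ^(2n-1)` to the `n × n` matrix with
`(𝓗x)_{i,j} = x_{i+j-1}` (1-based indexing). -/
noncomputable def hankelOp (n : ℕ) (x : Fin (2 * n - 1) → ℂ) :
    Matrix (Fin n) (Fin n) ℂ :=
  Matrix.of fun i j => x ⟨i.val + j.val, by have hi := i.isLt; have hj := j.isLt; omega⟩

/-- The Hermitian Toeplitz operator: maps `t ∈ ℂ^n` to the `n × n` matrix with
`(𝓣t)_{i,j} = t_{i-j+1}` for `i ≥ j` and `(𝓣t)_{i,j} = conj (t_{j-i+1})` for `i < j`. -/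
noncomputable def toeplitzOp (n : ℕ) (t : Fin n → ℂ) : Matrix (Fin n) (Fin n) ℂ :=
  Matrix.of fun i j =>
    if j.val ≤ i.val then t ⟨i.val - j.val, by have hi := i.isLt; omega⟩
    else star (t ⟨j.val - i.val, by have hj := j.isLt; omega⟩)

/-- The `2n × 2n` Hankel-Toeplitz block matrix `𝓜(x,t) = [[𝓣(conj t), 𝓗(conj x)],[𝓗x, 𝓣t]]`. -/
noncomputable def blockM (n : ℕ) (x : Fin (2 * n - 1) → ℂ) (t : Fin n → ℂ) :
    Matrix (Fin n ⊕ Fin n) (Fin n ⊕ Fin n) ℂ :=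
  Matrix.fromBlocks (toeplitzOp n fun j => star (t j)) (hankelOp n fun j => star (x j))
    (hankelOp n x) (toeplitzOp n t)

/-- The Vandermonde-type matrix `V ∈ ℂ^{n×K}` with `V_{j,k} = z_k^{j-1}` (1-based). -/
noncomputable def vand (n K : ℕ) (z : Fin K → ℂ) : Matrix (Fin n) (Fin K) ℂ :=
  Matrix.of fun j k => z k ^ (j : ℕ)

lemma aux_pow_mul_pow {u v : ℂ} (h : u * v = 1) (a c : ℕ) :
    u ^ a * v ^ c = u ^ (a - c) * v ^ (c - a) := by
  rcases le_total a c with hac | hac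
  · have hc : v ^ c = v ^ a * v ^ (c - a) := by rw [← pow_add]; congr 1; omega
    rw [hc, ← mul_assoc, ← mul_pow, h, one_pow, one_mul,
      Nat.sub_eq_zero_of_le hac, pow_zero, one_mul]
  · have ha : u ^ a = u ^ (a - c) * u ^ c := by rw [← pow_add]; congr 1; omega
    rw [ha, mul_assoc, ← mul_pow, h, one_pow, mul_one,
      Nat.sub_eq_zero_of_le hac, pow_zero, mul_one]

theorem blockM_factorization
    (n K : ℕ) (hn : 1 ≤ n) (hK : 1 ≤ K)
    (z : Fin K → ℂ) (hz : ∀ k, ‖z k‖ = 1)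
    (b : Fin K → ℝ) (hb : ∀ k, 0 ≤ b k)
    (φ : Fin K → ℂ)
    (x : Fin (2 * n - 1) → ℂ)
    (hx : ∀ j : Fin (2 * n - 1), x j = ∑ k : Fin K, (b k : ℂ) * φ k * z k ^ (j : ℕ))
    (t : Fin n → ℂ)
    (ht : ∀ j : Fin n, t j = ∑ k : Fin K, (b k : ℂ) * z k ^ (j : ℕ)) :
    blockM n x t
      = Matrix.fromBlocks ((vand n K z).map star) 0 0 (vand n K z)
        * Matrix.fromBlocks
            (Matrix.diagonal fun k => (b k : ℂ))
            (Matrix.diagonal fun k => (b k : ℂ) * star (φ k))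
            (Matrix.diagonal fun k => (b k : ℂ) * φ k)
            (Matrix.diagonal fun k => (b k : ℂ))
        * (Matrix.fromBlocks ((vand n K z).map star) 0 0 (vand n K z))ᴴ := by
  have h1 : ∀ k, star (z k) * z k = 1 := by
    intro k
    have hnsq : Complex.normSq (z k) = 1 := by
      rw [Complex.normSq_eq_norm_sq, hz k]; norm_num
    rw [mul_comm, show (star (z k)) = (starRingEnd ℂ) (z k) from rfl,
      Complex.mul_conj, hnsq, Complex.ofReal_one]
  have hts : ∀ m : Fin n, star (t m) = ∑ k : Fin K, (b k : ℂ) * star (z k) ^ (m : ℕ) := by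
    intro m; rw [ht, star_sum]
    apply Finset.sum_congr rfl; intro k _
    rw [star_mul', star_pow, show (star ((b k : ℂ))) = ((b k : ℂ)) from Complex.conj_ofReal _]
  have hxs : ∀ m : Fin (2 * n - 1),
      star (x m) = ∑ k : Fin K, (b k : ℂ) * star (φ k) * star (z k) ^ (m : ℕ) := by
    intro m; rw [hx, star_sum]
    apply Finset.sum_congr rfl; intro k _
    rw [star_mul', star_mul', star_pow, show (star ((b k : ℂ))) = ((b k : ℂ)) from Complex.conj_ofReal _]
  rw [Matrix.fromBlocks_conjTranspose, Matrix.fromBlocks_multiply, Matrix.fromBlocks_multiply]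
  simp only [Matrix.zero_mul, Matrix.mul_zero, add_zero, zero_add, Matrix.conjTranspose_zero]
  unfold blockM
  ext i j
  cases i with
  | inl i =>
    cases j with
    | inl j =>
      simp only [Matrix.fromBlocks_apply₁₁, toeplitzOp, vand, Matrix.of_apply,
        Matrix.mul_apply, Matrix.conjTranspose_apply, Matrix.map_apply, star_star,
        Matrix.diagonal_apply, mul_ite, mul_zero, ite_mul, zero_mul,
        Finset.sum_ite_eq, Finset.sum_ite_eq', Finset.mem_univ, if_true, Fin.val_mk]
      split_ifs with hji
      · rw [hts]
        apply Finset.sum_congr rfl; intro k _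
        simp only [Fin.val_mk]
        have hkey := aux_pow_mul_pow (h1 k) i.val j.val
        rw [Nat.sub_eq_zero_of_le hji, pow_zero, mul_one] at hkey
        simp only [star_pow]
        linear_combination (-(b k : ℂ)) * hkey
      · rw [ht]
        apply Finset.sum_congr rfl; intro k _
        simp only [Fin.val_mk]
        have hkey := aux_pow_mul_pow (h1 k) i.val j.val
        rw [Nat.sub_eq_zero_of_le (by omega : i.val ≤ j.val), pow_zero, one_mul] at hkey
        simp only [star_pow]
        linear_combination (-(b k : ℂ)) * hkey
    | inr j =>
      simp only [Matrix.fromBlocks_apply₁₂, hankelOp, vand, Matrix.of_apply,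
        Matrix.mul_apply, Matrix.conjTranspose_apply, Matrix.map_apply, star_star,
        Matrix.diagonal_apply, mul_ite, mul_zero, ite_mul, zero_mul,
        Finset.sum_ite_eq, Finset.sum_ite_eq', Finset.mem_univ, if_true]
      rw [hxs]
      apply Finset.sum_congr rfl; intro k _
      simp only [Fin.val_mk]
      simp only [star_pow, pow_add]; ring
  | inr i =>
    cases j with
    | inl j =>
      simp only [Matrix.fromBlocks_apply₂₁, hankelOp, vand, Matrix.of_apply,
        Matrix.mul_apply, Matrix.conjTranspose_apply, Matrix.map_apply, star_star,
        Matrix.diagonal_apply, mul_ite, mul_zero, ite_mul, zero_mul,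
        Finset.sum_ite_eq, Finset.sum_ite_eq', Finset.mem_univ, if_true]
      rw [hx]
      apply Finset.sum_congr rfl; intro k _
      simp only [Fin.val_mk]
      simp only [pow_add]; ring
    | inr j =>
      simp only [Matrix.fromBlocks_apply₂₂, toeplitzOp, vand, Matrix.of_apply,
        Matrix.mul_apply, Matrix.conjTranspose_apply, Matrix.map_apply,
        Matrix.diagonal_apply, mul_ite, mul_zero, ite_mul, zero_mul,
        Finset.sum_ite_eq, Finset.sum_ite_eq', Finset.mem_univ, if_true]
      split_ifs with hji
      · rw [ht]
        apply Finset.sum_congr rfl; intro k _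
        simp only [Fin.val_mk]
        have hkey := aux_pow_mul_pow (h1 k) j.val i.val
        rw [Nat.sub_eq_zero_of_le hji, pow_zero, one_mul] at hkey
        simp only [star_pow]
        linear_combination (-(b k : ℂ)) * hkey
      · rw [hts]
        apply Finset.sum_congr rfl; intro k _
        simp only [Fin.val_mk]
        have hkey := aux_pow_mul_pow (h1 k) j.val i.val
        rw [Nat.sub_eq_zero_of_le (by omega : i.val ≤ j.val), pow_zero, mul_one] at hkey
        simp only [star_pow]
        linear_combination (-(b k : ℂ)) * hkey
end

section
/- Let n,K ≥ 1, let z_1,…,z_K ∈ ℂ with |z_k| = 1, let b ∈ ℝ^K with b_k ≥ 0, and let φ ∈ ℂ^K with |φ_k| ≤ 1 for all k. Define x ∈ ℂ^{2n−1} by x_j = Σ_{k=1}^K b_k φ_k z_k^{j−1} and t ∈ ℂ^n by t_j = Σ_{k=1}^K b_k z_k^{j−1}. Then the 2n×2n block matrix 𝓜(x,t) is positive semidefinite. -/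
open Matrix
open scoped ComplexOrder

/-- Auxiliary "square root" matrix. -/
noncomputable def auxB (n K : ℕ) (z : Fin K → ℂ) (b : Fin K → ℝ) (φ : Fin K → ℂ) :
    Matrix (Fin K ⊕ Fin K) (Fin n ⊕ Fin n) ℂ
  | Sum.inl k, Sum.inl i => (Real.sqrt (b k) : ℂ) * z k ^ (i : ℕ)
  | Sum.inl k, Sum.inr i =>
      (Real.sqrt (b k) : ℂ) * (starRingEnd ℂ) (φ k) * (starRingEnd ℂ) (z k) ^ (i : ℕ)
  | Sum.inr k, Sum.inl _ => 0
  | Sum.inr k, Sum.inr i =>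
      (Real.sqrt (b k) : ℂ) * (Real.sqrt (1 - ‖φ k‖ ^ 2) : ℂ) *
        (starRingEnd ℂ) (z k) ^ (i : ℕ)

lemma pow_mul_pow_eq {u v : ℂ} (h : u * v = 1) {i j : ℕ} (hji : j ≤ i) :
    u ^ i * v ^ j = u ^ (i - j) := by
  have hi : u ^ i = u ^ (i - j) * u ^ j := by rw [← pow_add]; congr 1; omega
  rw [hi, mul_assoc, ← mul_pow, h, one_pow, mul_one]

theorem blockM_posSemidef
    (n K : ℕ) (hn : 1 ≤ n) (hK : 1 ≤ K)
    (z : Fin K → ℂ) (hz : ∀ k, ‖z k‖ = 1)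
    (b : Fin K → ℝ) (hb : ∀ k, 0 ≤ b k)
    (φ : Fin K → ℂ) (hφ : ∀ k, ‖φ k‖ ≤ 1)
    (x : Fin (2 * n - 1) → ℂ)
    (hx : ∀ j : Fin (2 * n - 1), x j = ∑ k : Fin K, (b k : ℂ) * φ k * z k ^ (j : ℕ))
    (t : Fin n → ℂ)
    (ht : ∀ j : Fin n, t j = ∑ k : Fin K, (b k : ℂ) * z k ^ (j : ℕ)) :
    (blockM n x t).PosSemidef := by
  have hc : ∀ k, (starRingEnd ℂ) (z k) * z k = 1 := fun k => by
    rw [mul_comm, Complex.mul_conj, Complex.normSq_eq_norm_sq, hz k]; norm_num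
  have hc' : ∀ k, z k * (starRingEnd ℂ) (z k) = 1 := fun k => by rw [mul_comm]; exact hc k
  have hss : ∀ k, ((Real.sqrt (b k) : ℝ) : ℂ) * ((Real.sqrt (b k) : ℝ) : ℂ) = (b k : ℂ) :=
    fun k => by rw [← Complex.ofReal_mul, Real.mul_self_sqrt (hb k)]
  have hgg : ∀ k, ((Real.sqrt (1 - ‖φ k‖ ^ 2) : ℝ) : ℂ) *
      ((Real.sqrt (1 - ‖φ k‖ ^ 2) : ℝ) : ℂ) +
      (starRingEnd ℂ) (φ k) * φ k = 1 := fun k => by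
    have h0 : (0:ℝ) ≤ 1 - ‖φ k‖ ^ 2 := by nlinarith [norm_nonneg (φ k), hφ k]
    rw [← Complex.ofReal_mul, Real.mul_self_sqrt h0, mul_comm ((starRingEnd ℂ) (φ k)),
      Complex.mul_conj, Complex.normSq_eq_norm_sq]
    push_cast; ring
  have key : blockM n x t = (auxB n K z b φ)ᴴ * (auxB n K z b φ) := by
    ext p q
    rw [Matrix.mul_apply]
    rw [Fintype.sum_sum_type]
    simp only [Matrix.conjTranspose_apply]
    rcases p with i | i <;> rcases q with j | j
    · -- (inl, inl): Toeplitz of conj t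
      simp only [blockM, Matrix.fromBlocks_apply₁₁, toeplitzOp, Matrix.of_apply, ht, auxB]
      by_cases hij : (j : ℕ) ≤ (i : ℕ)
      · rw [if_pos hij]
        simp only [star_sum, star_mul', map_pow, Complex.star_def, Complex.conj_ofReal,
          star_zero, mul_zero, Finset.sum_const_zero, add_zero]
        refine Finset.sum_congr rfl fun k _ => ?_
        rw [mul_mul_mul_comm, hss k, pow_mul_pow_eq (hc k) hij]
      · rw [if_neg hij]
        simp only [star_sum, star_mul', star_star, map_pow, Complex.star_def,
          Complex.conj_conj, Complex.conj_ofReal, star_zero, mul_zero,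
          Finset.sum_const_zero, add_zero]
        refine Finset.sum_congr rfl fun k _ => ?_
        rw [mul_mul_mul_comm, hss k, mul_comm ((starRingEnd ℂ) (z k) ^ (i : ℕ)),
          pow_mul_pow_eq (hc' k) (by omega : (i : ℕ) ≤ (j : ℕ))]
    · -- (inl, inr): Hankel of conj x
      simp only [blockM, Matrix.fromBlocks_apply₁₂, hankelOp, Matrix.of_apply, hx, auxB]
      simp only [star_sum, star_mul', star_star, map_pow, Complex.star_def, Complex.conj_conj,
        Complex.conj_ofReal, star_zero, zero_mul, mul_zero, Finset.sum_const_zero, add_zero]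
      refine Finset.sum_congr rfl fun k _ => ?_
      rw [pow_add, ← hss k]; ring
    · -- (inr, inl): Hankel of x
      simp only [blockM, Matrix.fromBlocks_apply₂₁, hankelOp, Matrix.of_apply, hx, auxB]
      simp only [star_sum, star_mul', star_star, map_pow, Complex.star_def, Complex.conj_conj,
        Complex.conj_ofReal, star_zero, zero_mul, mul_zero, Finset.sum_const_zero, add_zero]
      refine Finset.sum_congr rfl fun k _ => ?_
      rw [pow_add, ← hss k]; ring
    · -- (inr, inr): Toeplitz of t
      simp only [blockM, Matrix.fromBlocks_apply₂₂, toeplitzOp, Matrix.of_apply, ht, auxB]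
      by_cases hij : (j : ℕ) ≤ (i : ℕ)
      · rw [if_pos hij]
        simp only [star_sum, star_mul', star_star, map_pow, Complex.star_def, Complex.conj_conj,
          Complex.conj_ofReal, star_zero, zero_mul, mul_zero, Finset.sum_const_zero, add_zero]
        rw [← Finset.sum_add_distrib]
        refine Finset.sum_congr rfl fun k _ => ?_
        rw [← pow_mul_pow_eq (hc' k) hij, ← hss k]
        linear_combination (-((Real.sqrt (b k) : ℂ) * (Real.sqrt (b k) : ℂ) *
          (z k ^ (i : ℕ) * (starRingEnd ℂ) (z k) ^ (j : ℕ)))) * hgg k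
      · rw [if_neg hij]
        simp only [star_sum, star_mul', star_star, map_pow, Complex.star_def, Complex.conj_conj,
          Complex.conj_ofReal, star_zero, zero_mul, mul_zero, Finset.sum_const_zero, add_zero]
        rw [← Finset.sum_add_distrib]
        refine Finset.sum_congr rfl fun k _ => ?_
        rw [← pow_mul_pow_eq (hc k) (show (i : ℕ) ≤ (j : ℕ) by omega), ← hss k]
        linear_combination (-((Real.sqrt (b k) : ℂ) * (Real.sqrt (b k) : ℂ) *
          (z k ^ (i : ℕ) * (starRingEnd ℂ) (z k) ^ (j : ℕ)))) * hgg k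
  rw [key]
  exact Matrix.posSemidef_conjTranspose_mul_self _
end

section
/- Let n,K ≥ 1, let z_1,…,z_K ∈ ℂ with |z_k| = 1, let b ∈ ℝ^K with b_k ≥ 0, and let φ ∈ ℂ^K with |φ_k| = 1 for all k. Define x ∈ ℂ^{2n−1} by x_j = Σ_{k=1}^K b_k φ_k z_k^{j−1} and t ∈ ℂ^n by t_j = Σ_{k=1}^K b_k z_k^{j−1}. Then rank(𝓜(x,t)) ≤ K. -/
open Matrix
open scoped ComplexOrder

lemma key1 (w : ℂ) (hw : w * (starRingEnd ℂ) w = 1) (i j : ℕ) (h : j ≤ i) :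
    (starRingEnd ℂ) w ^ i * w ^ j = (starRingEnd ℂ) w ^ (i - j) := by
  have hi : (starRingEnd ℂ) w ^ i = (starRingEnd ℂ) w ^ (i - j) * (starRingEnd ℂ) w ^ j := by
    rw [← pow_add]; congr 1; omega
  rw [hi, mul_assoc, ← mul_pow, mul_comm ((starRingEnd ℂ) w) w, hw, one_pow, mul_one]

lemma key2 (w : ℂ) (hw : w * (starRingEnd ℂ) w = 1) (i j : ℕ) (h : j ≤ i) :
    w ^ i * (starRingEnd ℂ) w ^ j = w ^ (i - j) := by
  have := key1 ((starRingEnd ℂ) w) (by simpa [mul_comm] using hw) i j h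
  simpa using this

theorem blockM_rank_le
    (n K : ℕ) (hn : 1 ≤ n) (hK : 1 ≤ K)
    (z : Fin K → ℂ) (hz : ∀ k, ‖z k‖ = 1)
    (b : Fin K → ℝ) (hb : ∀ k, 0 ≤ b k)
    (φ : Fin K → ℂ) (hφ : ∀ k, ‖φ k‖ = 1)
    (x : Fin (2 * n - 1) → ℂ)
    (hx : ∀ j : Fin (2 * n - 1), x j = ∑ k : Fin K, (b k : ℂ) * φ k * z k ^ (j : ℕ))
    (t : Fin n → ℂ)
    (ht : ∀ j : Fin n, t j = ∑ k : Fin K, (b k : ℂ) * z k ^ (j : ℕ)) :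
    (blockM n x t).rank ≤ K := by
  set u : Fin K → (Fin n ⊕ Fin n) → ℂ := fun k =>
    Sum.elim (fun i : Fin n => ((starRingEnd ℂ) (z k)) ^ i.val)
      (fun i : Fin n => φ k * z k ^ i.val) with hu
  set A : Matrix (Fin n ⊕ Fin n) (Fin K) ℂ :=
    Matrix.of fun p k => (b k : ℂ) * u k p with hA
  set B : Matrix (Fin K) (Fin n ⊕ Fin n) ℂ :=
    Matrix.of fun k q => star (u k q) with hB
  have hz1 : ∀ k, z k * (starRingEnd ℂ) (z k) = 1 := by
    intro k
    have := Complex.mul_conj (z k)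
    rw [Complex.normSq_eq_norm_sq, hz k] at this
    simpa using this
  have hφ1 : ∀ k, φ k * (starRingEnd ℂ) (φ k) = 1 := by
    intro k
    have := Complex.mul_conj (φ k)
    rw [Complex.normSq_eq_norm_sq, hφ k] at this
    simpa using this
  have hM : blockM n x t = A * B := by
    ext p q
    rcases p with i | i <;> rcases q with j | j <;>
      simp only [blockM, Matrix.fromBlocks, Matrix.mul_apply, hA, hB, hu,
        Matrix.of_apply, Sum.elim_inl, Sum.elim_inr, toeplitzOp, hankelOp]
    · -- top-left
      by_cases h : j.val ≤ i.val <;>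
        [rw [if_pos h]; rw [if_neg h]] <;>
        simp only [ht, star_sum, star_mul', star_pow, Complex.star_def,
          Complex.conj_conj, Complex.conj_ofReal, Finset.mul_sum] <;>
        refine Finset.sum_congr rfl fun k _ => ?_
      · linear_combination (-(b k : ℂ)) * key1 (z k) (hz1 k) i.val j.val h
      · linear_combination (-(b k : ℂ)) * key2 (z k) (hz1 k) j.val i.val (by omega)
    · -- top-right
      simp only [hx, star_sum, star_mul', star_pow, Complex.star_def,
        Complex.conj_conj, Complex.conj_ofReal]
      refine Finset.sum_congr rfl fun k _ => ?_
      ring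
    · -- bottom-left
      simp only [hx, star_pow, star_star, Complex.star_def, Complex.conj_conj]
      refine Finset.sum_congr rfl fun k _ => ?_
      ring
    · -- bottom-right
      by_cases h : j.val ≤ i.val <;>
        [rw [if_pos h]; rw [if_neg h]] <;>
        simp only [ht, star_sum, star_mul', star_pow, Complex.star_def,
          Complex.conj_conj, Complex.conj_ofReal] <;>
        refine Finset.sum_congr rfl fun k _ => ?_
      · linear_combination (-(b k : ℂ)) * key2 (z k) (hz1 k) i.val j.val h +
          (-((b k : ℂ) * z k ^ i.val * ((starRingEnd ℂ) (z k)) ^ j.val)) * hφ1 k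
      · linear_combination (-(b k : ℂ)) * key1 (z k) (hz1 k) j.val i.val (by omega) +
          (-((b k : ℂ) * z k ^ i.val * ((starRingEnd ℂ) (z k)) ^ j.val)) * hφ1 k
  rw [hM]
  calc (A * B).rank ≤ A.rank := Matrix.rank_mul_le_left A B
    _ ≤ Fintype.card (Fin K) := A.rank_le_card_width
    _ = K := Fintype.card_fin K
end

section
/- Let n > K ≥ 1, let z_1,…,z_K ∈ ℂ be pairwise distinct with |z_k| = 1, let b ∈ ℝ^K with b_k > 0, and let φ ∈ ℂ^K with |φ_k| = 1 for all k. Define x ∈ ℂ^{2n−1} by x_j = Σ_{k=1}^K b_k φ_k z_k^{j−1} and t ∈ ℂ^n by t_j = Σ_{k=1}^K b_k z_k^{j−1}. Then rank(𝓣t) = K and rank(𝓜(x,t)) = K; in particular rank(𝓜(x,t)) = rank(𝓣t). -/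
open Matrix
open scoped ComplexOrder

/-- Selecting rows does not increase the rank. -/
lemma rank_rowselect_le {m : Type*} [Fintype m] [DecidableEq m] {p q : ℕ}
    (A : Matrix m (Fin p) ℂ) (r : Fin q → m) :
    (A.submatrix r id).rank ≤ A.rank := by
  have h : A.submatrix r id = ((1 : Matrix m m ℂ).submatrix r id) * A := by
    ext i j
    simp [Matrix.mul_apply, Matrix.one_apply, Matrix.submatrix_apply]
  rw [h]
  exact Matrix.rank_mul_le_right _ _

/-- Key rank lemma: if `B` is an `m × K` matrix with an invertible `K × K` row-submatrix
and `b` is positive, then `B * diag b * Bᴴ` has rank `K`. -/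
lemma rank_BDBH {m : Type*} [Fintype m] [DecidableEq m] {p : ℕ}
    (B : Matrix m (Fin p) ℂ) (b : Fin p → ℝ) (hb : ∀ k, 0 < b k)
    (r : Fin p → m) (hS : IsUnit (B.submatrix r id).det) :
    (B * Matrix.diagonal (fun k => (b k : ℂ)) * Bᴴ).rank = p := by
  set s : Fin p → ℂ := fun k => (Real.sqrt (b k) : ℂ) with hs
  have hstar : (Matrix.diagonal s)ᴴ = Matrix.diagonal s := by
    ext i j
    by_cases h : i = j <;> simp [Matrix.diagonal, Matrix.conjTranspose_apply, h, hs, eq_comm]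
  have hdd : Matrix.diagonal (fun k => (b k : ℂ)) = Matrix.diagonal s * (Matrix.diagonal s)ᴴ := by
    rw [hstar, Matrix.diagonal_mul_diagonal]
    apply congrArg Matrix.diagonal
    funext k
    simp only [hs, ← Complex.ofReal_mul, Real.mul_self_sqrt (hb k).le]
  have hfac : B * Matrix.diagonal (fun k => (b k : ℂ)) * Bᴴ
      = (B * Matrix.diagonal s) * (B * Matrix.diagonal s)ᴴ := by
    rw [hdd, Matrix.conjTranspose_mul]
    simp only [Matrix.mul_assoc]
  have hdet : IsUnit (Matrix.diagonal s).det := by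
    rw [Matrix.det_diagonal]
    refine isUnit_iff_ne_zero.mpr (Finset.prod_ne_zero_iff.mpr fun k _ => ?_)
    simp only [hs, ne_eq, Complex.ofReal_eq_zero]
    exact (Real.sqrt_pos.mpr (hb k)).ne'
  rw [hfac, Matrix.rank_self_mul_conjTranspose, Matrix.rank_mul_eq_left_of_isUnit_det _ _ hdet]
  refine le_antisymm (by simpa using B.rank_le_card_width) ?_
  have h1 : (B.submatrix r id).rank = p := by
    rw [Matrix.rank_of_isUnit _ ((Matrix.isUnit_iff_isUnit_det _).mpr hS)]
    simp
  calc (p : ℕ) = (B.submatrix r id).rank := h1.symm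
    _ ≤ B.rank := rank_rowselect_le B r





theorem blockM_rank_eq
    (n K : ℕ) (hK : 1 ≤ K) (hKn : K < n)
    (z : Fin K → ℂ) (hz : ∀ k, ‖z k‖ = 1)
    (hz' : Function.Injective z)
    (b : Fin K → ℝ) (hb : ∀ k, 0 < b k)
    (φ : Fin K → ℂ) (hφ : ∀ k, ‖φ k‖ = 1)
    (x : Fin (2 * n - 1) → ℂ)
    (hx : ∀ j : Fin (2 * n - 1), x j = ∑ k : Fin K, (b k : ℂ) * φ k * z k ^ (j : ℕ))
    (t : Fin n → ℂ)
    (ht : ∀ j : Fin n, t j = ∑ k : Fin K, (b k : ℂ) * z k ^ (j : ℕ)) :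
    (toeplitzOp n t).rank = K ∧ (blockM n x t).rank = K
      ∧ (blockM n x t).rank = (toeplitzOp n t).rank := by
  have hzz : ∀ k, z k * (starRingEnd ℂ) (z k) = 1 := fun k => by
    rw [Complex.mul_conj, Complex.normSq_eq_norm_sq, hz, one_pow, Complex.ofReal_one]
  have hφφ : ∀ k, φ k * (starRingEnd ℂ) (φ k) = 1 := fun k => by
    rw [Complex.mul_conj, Complex.normSq_eq_norm_sq, hφ, one_pow, Complex.ofReal_one]
  have hφ0 : ∀ k, φ k ≠ 0 := by
    intro k h
    have := hφ k
    rw [h] at this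
    simp at this
  have key1 : ∀ (k : Fin K) (i j : ℕ), j ≤ i →
      z k ^ i * (starRingEnd ℂ) (z k) ^ j = z k ^ (i - j) := by
    intro k i j h
    rw [show i = (i - j) + j by omega, pow_add, mul_assoc, ← mul_pow, hzz k, one_pow, mul_one,
      Nat.add_sub_cancel]
  have key2 : ∀ (k : Fin K) (i j : ℕ), i ≤ j →
      z k ^ i * (starRingEnd ℂ) (z k) ^ j = (starRingEnd ℂ) (z k) ^ (j - i) := by
    intro k i j h
    calc z k ^ i * (starRingEnd ℂ) (z k) ^ j
        = (starRingEnd ℂ) (z k) ^ (j - i) * (z k * (starRingEnd ℂ) (z k)) ^ i := by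
          rw [show j = (j - i) + i by omega, pow_add, mul_pow, Nat.add_sub_cancel]; ring
      _ = (starRingEnd ℂ) (z k) ^ (j - i) := by rw [hzz k, one_pow, mul_one]
  set d : Fin K → ℂ := fun k => (b k : ℂ) with hd
  set V : Matrix (Fin n) (Fin K) ℂ := Matrix.of fun i k => z k ^ (i : ℕ) with hV
  set A : Matrix (Fin n ⊕ Fin n) (Fin K) ℂ := Matrix.of fun s k =>
    Sum.elim (fun i : Fin n => (starRingEnd ℂ) (z k) ^ (i : ℕ))
      (fun i : Fin n => φ k * z k ^ (i : ℕ)) s with hA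
  -- entry formulas
  have hVD : ∀ i j : Fin n, (V * Matrix.diagonal d * Vᴴ) i j
      = ∑ k, z k ^ (i : ℕ) * d k * (starRingEnd ℂ) (z k) ^ (j : ℕ) := by
    intro i j
    rw [Matrix.mul_apply]
    refine Finset.sum_congr rfl fun k _ => ?_
    rw [Matrix.mul_diagonal, Matrix.conjTranspose_apply]
    simp [hV, map_pow]
  have hAD : ∀ i j : Fin n ⊕ Fin n, (A * Matrix.diagonal d * Aᴴ) i j
      = ∑ k, A i k * d k * (starRingEnd ℂ) (A j k) := by
    intro i j
    rw [Matrix.mul_apply]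
    refine Finset.sum_congr rfl fun k _ => ?_
    rw [Matrix.mul_diagonal, Matrix.conjTranspose_apply]
    rfl
  have hstarsum : ∀ (m : ℕ), star (∑ k, (b k : ℂ) * z k ^ m)
      = ∑ k, (b k : ℂ) * (starRingEnd ℂ) (z k) ^ m := by
    intro m
    rw [star_sum]
    refine Finset.sum_congr rfl fun k _ => ?_
    rw [star_mul', star_pow, Complex.star_def, Complex.conj_ofReal]
  have hstarsumφ : ∀ (m : ℕ), star (∑ k, (b k : ℂ) * φ k * z k ^ m)
      = ∑ k, (b k : ℂ) * (starRingEnd ℂ) (φ k) * (starRingEnd ℂ) (z k) ^ m := by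
    intro m
    rw [star_sum]
    refine Finset.sum_congr rfl fun k _ => ?_
    rw [star_mul', star_pow, star_mul', Complex.star_def, Complex.conj_ofReal]
  -- factorization of the Toeplitz matrix
  have hT : toeplitzOp n t = V * Matrix.diagonal d * Vᴴ := by
    ext i j
    rw [hVD]
    simp only [toeplitzOp, Matrix.of_apply]
    by_cases h : (j : ℕ) ≤ (i : ℕ)
    · rw [if_pos h, ht]
      refine Finset.sum_congr rfl fun k _ => ?_
      rw [show z k ^ (i:ℕ) * d k * (starRingEnd ℂ) (z k) ^ (j:ℕ)
          = d k * (z k ^ (i:ℕ) * (starRingEnd ℂ) (z k) ^ (j:ℕ)) from by ring, key1 k _ _ h]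
    · rw [if_neg h, ht, hstarsum]
      refine Finset.sum_congr rfl fun k _ => ?_
      rw [show z k ^ (i:ℕ) * d k * (starRingEnd ℂ) (z k) ^ (j:ℕ)
          = d k * (z k ^ (i:ℕ) * (starRingEnd ℂ) (z k) ^ (j:ℕ)) from by ring,
        key2 k _ _ (by omega)]
  -- factorization of the block matrix
  have hM : blockM n x t = A * Matrix.diagonal d * Aᴴ := by
    ext i j
    rw [hAD]
    rcases i with i | i <;> rcases j with j | j <;>
      simp only [blockM, Matrix.fromBlocks_apply₁₁, Matrix.fromBlocks_apply₁₂,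
        Matrix.fromBlocks_apply₂₁, Matrix.fromBlocks_apply₂₂, toeplitzOp, hankelOp,
        Matrix.of_apply, hA, Sum.elim_inl, Sum.elim_inr]
    · by_cases h : (j : ℕ) ≤ (i : ℕ)
      · rw [if_pos h, ht, hstarsum]
        refine Finset.sum_congr rfl fun k _ => ?_
        rw [map_pow, Complex.conj_conj,
          show (starRingEnd ℂ) (z k) ^ (i:ℕ) * d k * z k ^ (j:ℕ)
            = d k * (z k ^ (j:ℕ) * (starRingEnd ℂ) (z k) ^ (i:ℕ)) from by ring, key2 k _ _ h]
      · rw [if_neg h, star_star, ht]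
        refine Finset.sum_congr rfl fun k _ => ?_
        rw [map_pow, Complex.conj_conj,
          show (starRingEnd ℂ) (z k) ^ (i:ℕ) * d k * z k ^ (j:ℕ)
            = d k * (z k ^ (j:ℕ) * (starRingEnd ℂ) (z k) ^ (i:ℕ)) from by ring,
          key1 k _ _ (by omega)]
    · rw [hx, hstarsumφ]
      refine Finset.sum_congr rfl fun k _ => ?_
      rw [_root_.map_mul, map_pow,
        show (starRingEnd ℂ) (z k) ^ (i:ℕ) * d k
              * ((starRingEnd ℂ) (φ k) * (starRingEnd ℂ) (z k) ^ (j:ℕ))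
          = d k * (starRingEnd ℂ) (φ k)
              * ((starRingEnd ℂ) (z k) ^ (i:ℕ) * (starRingEnd ℂ) (z k) ^ (j:ℕ)) from by ring,
        ← pow_add]
    · rw [hx]
      refine Finset.sum_congr rfl fun k _ => ?_
      rw [map_pow, Complex.conj_conj,
        show φ k * z k ^ (i:ℕ) * d k * z k ^ (j:ℕ)
          = d k * φ k * (z k ^ (i:ℕ) * z k ^ (j:ℕ)) from by ring, ← pow_add]
    · by_cases h : (j : ℕ) ≤ (i : ℕ)
      · rw [if_pos h, ht]
        refine Finset.sum_congr rfl fun k _ => ?_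
        rw [_root_.map_mul, map_pow,
          show φ k * z k ^ (i:ℕ) * d k
                * ((starRingEnd ℂ) (φ k) * (starRingEnd ℂ) (z k) ^ (j:ℕ))
            = d k * (z k ^ (i:ℕ) * (starRingEnd ℂ) (z k) ^ (j:ℕ))
                * (φ k * (starRingEnd ℂ) (φ k)) from by ring,
          key1 k _ _ h, hφφ k, mul_one]
      · rw [if_neg h, ht, hstarsum]
        refine Finset.sum_congr rfl fun k _ => ?_
        rw [_root_.map_mul, map_pow,
          show φ k * z k ^ (i:ℕ) * d k
                * ((starRingEnd ℂ) (φ k) * (starRingEnd ℂ) (z k) ^ (j:ℕ))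
            = d k * (z k ^ (i:ℕ) * (starRingEnd ℂ) (z k) ^ (j:ℕ))
                * (φ k * (starRingEnd ℂ) (φ k)) from by ring,
          key2 k _ _ (by omega), hφφ k, mul_one]
  -- ranks
  set r : Fin K → Fin n := fun i => ⟨i, lt_trans i.isLt hKn⟩ with hr
  have hTr : (toeplitzOp n t).rank = K := by
    rw [hT]
    refine rank_BDBH V b hb r ?_
    have : V.submatrix r id = (Matrix.vandermonde z)ᵀ := by
      ext i k
      simp [hV, hr, Matrix.vandermonde]
    rw [this, Matrix.det_transpose]
    exact isUnit_iff_ne_zero.mpr (Matrix.det_vandermonde_ne_zero_iff.mpr hz')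
  have hMr : (blockM n x t).rank = K := by
    rw [hM]
    refine rank_BDBH A b hb (fun i => Sum.inr (r i)) ?_
    have : A.submatrix (fun i => Sum.inr (r i)) id
        = (Matrix.vandermonde z)ᵀ * Matrix.diagonal φ := by
      ext i k
      rw [Matrix.mul_diagonal]
      simp [hA, hr, Matrix.vandermonde, mul_comm]
    rw [this, Matrix.det_mul, Matrix.det_transpose, Matrix.det_diagonal]
    exact isUnit_iff_ne_zero.mpr (mul_ne_zero
      (Matrix.det_vandermonde_ne_zero_iff.mpr hz')
      (Finset.prod_ne_zero_iff.mpr fun k _ => hφ0 k))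
  exact ⟨hTr, hMr, hMr.trans hTr.symm⟩
end

section
/- Let K ≥ 1, let b ∈ ℝ^K with b_k > 0 for all k, and let S ∈ ℂ^K. If the 2K×2K block matrix [[diag(b), diag(conj(S))],[diag(S), diag(b)]] is positive semidefinite and has rank at most K, then |S_k| = b_k for all k = 1,…,K. -/
open Matrix
open scoped ComplexOrder

theorem schur_modulus_eq
    (K : ℕ) (hK : 1 ≤ K)
    (b : Fin K → ℝ) (hb : ∀ k, 0 < b k)
    (S : Fin K → ℂ)
    (M : Matrix (Fin K ⊕ Fin K) (Fin K ⊕ Fin K) ℂ)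
    (hM : M = Matrix.fromBlocks
      (Matrix.diagonal fun k => (b k : ℂ))
      (Matrix.diagonal fun k => star (S k))
      (Matrix.diagonal S)
      (Matrix.diagonal fun k => (b k : ℂ)))
    (hpsd : M.PosSemidef) (hrank : M.rank ≤ K) :
    ∀ k, ‖S k‖ = b k := by
  classical
  intro k
  by_contra hne
  -- the linear map restricting to coordinates inl j, j ≠ k
  set f : ((Fin K ⊕ Fin K) → ℂ) →ₗ[ℂ] ({j : Fin K // j ≠ k} → ℂ) :=
    LinearMap.funLeft ℂ ℂ (fun j => Sum.inl j.1) with hf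
  have hbne : ∀ j, (b j : ℂ) ≠ 0 := fun j => by
    exact_mod_cast ne_of_gt (hb j)
  have hkey : ∀ v ∈ LinearMap.ker M.mulVecLin, f v = 0 → v = 0 := by
    intro v hv hfv
    have hmv : M.mulVec v = 0 := hv
    have hl : ∀ j, (b j : ℂ) * v (Sum.inl j) + star (S j) * v (Sum.inr j) = 0 := by
      intro j
      have := congrFun hmv (Sum.inl j)
      simpa [hM, Matrix.mulVec, dotProduct, Fintype.sum_sum_type,
        Matrix.diagonal, Matrix.fromBlocks, ite_mul, Finset.sum_ite_eq] using this
    have hr : ∀ j, S j * v (Sum.inl j) + (b j : ℂ) * v (Sum.inr j) = 0 := by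
      intro j
      have := congrFun hmv (Sum.inr j)
      simpa [hM, Matrix.mulVec, dotProduct, Fintype.sum_sum_type,
        Matrix.diagonal, Matrix.fromBlocks, ite_mul, Finset.sum_ite_eq] using this
    have hinlne : ∀ j, j ≠ k → v (Sum.inl j) = 0 := fun j hj => congrFun hfv ⟨j, hj⟩
    -- at k : determinant argument
    have hdet : ((b k : ℂ) ^ 2 - star (S k) * S k) * v (Sum.inl k) = 0 := by
      linear_combination (b k : ℂ) * hl k - star (S k) * hr k
    have hdne : ((b k : ℂ) ^ 2 - star (S k) * S k) ≠ 0 := by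
      have h1 : star (S k) * S k = ((Complex.normSq (S k) : ℝ) : ℂ) := by
        rw [Complex.star_def, mul_comm, Complex.mul_conj]
      rw [h1]
      have : (b k) ^ 2 ≠ Complex.normSq (S k) := by
        intro h
        apply hne
        have habs : ‖S k‖ ^ 2 = b k ^ 2 := by
          rw [Complex.sq_norm, ← h]
        have hfac : (‖S k‖ - b k) * (‖S k‖ + b k) = 0 := by
          linear_combination habs
        have hpos : ‖S k‖ + b k > 0 := by
          have := norm_nonneg (S k); linarith [hb k]
        have := (mul_eq_zero.mp hfac).resolve_right (ne_of_gt hpos)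
        linarith
      intro h
      apply this
      have := sub_eq_zero.mp h
      exact_mod_cast this
    have hak : v (Sum.inl k) = 0 := by
      rcases mul_eq_zero.mp hdet with h | h
      · exact absurd h hdne
      · exact h
    have hinl : ∀ j, v (Sum.inl j) = 0 := by
      intro j
      by_cases hj : j = k
      · rw [hj]; exact hak
      · exact hinlne j hj
    have hinr : ∀ j, v (Sum.inr j) = 0 := by
      intro j
      have := hr j
      rw [hinl j, mul_zero, zero_add] at this
      exact (mul_eq_zero.mp this).resolve_left (hbne j)
    funext i
    cases i with
    | inl j => exact hinl j
    | inr j => exact hinr j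
  -- finrank of the kernel is at most K - 1
  have hinj : Function.Injective
      (f.comp (LinearMap.ker M.mulVecLin).subtype) := by
    rw [← LinearMap.ker_eq_bot, LinearMap.ker_eq_bot']
    rintro ⟨v, hv⟩ h
    exact Subtype.ext (hkey v hv h)
  have hcard : Fintype.card {j : Fin K // j ≠ k} = K - 1 := by
    have := Fintype.card_subtype_compl (fun j : Fin K => j = k)
    simpa [Fintype.card_subtype_eq] using this
  have hker_le : Module.finrank ℂ (LinearMap.ker M.mulVecLin) ≤ K - 1 := by
    have := LinearMap.finrank_le_finrank_of_injective hinj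
    rwa [Module.finrank_fintype_fun_eq_card, hcard] at this
  have hrn := LinearMap.finrank_range_add_finrank_ker M.mulVecLin
  rw [Module.finrank_fintype_fun_eq_card] at hrn
  simp only [Fintype.card_sum, Fintype.card_fin] at hrn
  have hrank' : M.rank = Module.finrank ℂ (LinearMap.range M.mulVecLin) := rfl
  omega
end

section
/- Let n ≥ K ≥ 1, let z_1,…,z_K ∈ ℂ be pairwise distinct, let c ∈ ℂ^K with c_k ≠ 0 for all k, and let x ∈ ℂ^{2n−1} be defined by x_j = Σ_{k=1}^K c_k z_k^{j−1}. Then the n×n Hankel matrix 𝓗x has rank exactly K. -/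
open Matrix

theorem hankel_rank_eq
    (n K : ℕ) (hK : 1 ≤ K) (hKn : K ≤ n)
    (z : Fin K → ℂ) (hz : Function.Injective z)
    (c : Fin K → ℂ) (hc : ∀ k, c k ≠ 0)
    (x : Fin (2 * n - 1) → ℂ)
    (hx : ∀ j : Fin (2 * n - 1), x j = ∑ k : Fin K, c k * z k ^ (j : ℕ)) :
    (hankelOp n x).rank = K := by
  set H := hankelOp n x with hH
  -- factorization H = V * B
  set V : Matrix (Fin n) (Fin K) ℂ := Matrix.of fun i k => z k ^ (i : ℕ) with hV
  set B : Matrix (Fin K) (Fin n) ℂ := Matrix.of fun k j => c k * z k ^ (j : ℕ) with hB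
  have hfac : H = V * B := by
    ext i j
    simp only [hH, hankelOp, Matrix.mul_apply, hV, hB, Matrix.of_apply]
    rw [hx]
    refine Finset.sum_congr rfl fun k _ => ?_
    ring
  have hupper : H.rank ≤ K := by
    calc H.rank = (V * B).rank := by rw [hfac]
    _ ≤ V.rank := Matrix.rank_mul_le_left V B
    _ ≤ Fintype.card (Fin K) := Matrix.rank_le_card_width V
    _ = K := Fintype.card_fin K
  -- lower bound via the leading K×K submatrix
  have hnK : ∀ k : Fin K, (k : ℕ) < n := fun k => lt_of_lt_of_le k.isLt hKn
  set f : Fin K → Fin n := Fin.castLE hKn with hf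
  set S : Matrix (Fin K) (Fin K) ℂ := H.submatrix f f with hS
  have hSfac : S = (Matrix.vandermonde z)ᵀ * (Matrix.diagonal c * Matrix.vandermonde z) := by
    ext a b
    simp only [hS, Matrix.submatrix_apply, hH, hankelOp, Matrix.of_apply,
      Matrix.mul_apply, Matrix.transpose_apply, Matrix.vandermonde,
      Matrix.diagonal_mul, Matrix.of_apply]
    rw [hx]
    refine Finset.sum_congr rfl fun k _ => ?_
    simp only [hf, Fin.coe_castLE, Matrix.diagonal_apply, ite_mul, zero_mul,
      Finset.sum_ite_eq, Finset.mem_univ, if_true]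
    rw [pow_add]
    ring
  have hdet : S.det ≠ 0 := by
    rw [hSfac, Matrix.det_mul, Matrix.det_mul, Matrix.det_transpose, Matrix.det_diagonal]
    refine mul_ne_zero (Matrix.det_vandermonde_ne_zero_iff.mpr hz)
      (mul_ne_zero (Finset.prod_ne_zero_iff.mpr fun k _ => hc k)
        (Matrix.det_vandermonde_ne_zero_iff.mpr hz))
  have hSrank : S.rank = K := by
    rw [Matrix.rank_of_isUnit S ((Matrix.isUnit_iff_isUnit_det S).mpr hdet.isUnit)]
    exact Fintype.card_fin K
  -- S = P * (H * Q)
  set P : Matrix (Fin K) (Fin n) ℂ := (1 : Matrix (Fin n) (Fin n) ℂ).submatrix f id with hP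
  set Q : Matrix (Fin n) (Fin K) ℂ := (1 : Matrix (Fin n) (Fin n) ℂ).submatrix id f with hQ
  have hSeq : S = P * (H * Q) := by
    have h1 : H * Q = H.submatrix id f := by
      have := Matrix.mul_submatrix_one (Equiv.refl (Fin n)) f H
      simpa using this
    have h2 : P * (H.submatrix id f) = (H.submatrix id f).submatrix f id := by
      have := Matrix.one_submatrix_mul f (Equiv.refl (Fin n)) (H.submatrix id f)
      simpa using this
    rw [h1, h2, hS, Matrix.submatrix_submatrix]
    rfl
  have hlower : K ≤ H.rank := by
    calc K = S.rank := hSrank.symm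
    _ = (P * (H * Q)).rank := by rw [hSeq]
    _ ≤ (H * Q).rank := Matrix.rank_mul_le_right P (H * Q)
    _ ≤ H.rank := Matrix.rank_mul_le_left H Q
  omega
end

section
/- Let n ≥ 1, L ≥ 1 and let W_1^l, W_3^l ∈ ℂ^{n×n} be Hermitian for l = 1,…,L. Define t* ∈ ℂ^n by t*_a = (1/(2L(n−a+1))) · Σ_{l=1}^L Σ_{(i,j): i−j = a−1} (conj(W_1^l) + W_3^l)_{i,j} for a = 1,…,n. Then for every t ∈ ℂ^n, Σ_{l=1}^L ( ‖𝓣(conj t*) − W_1^l‖_F² + ‖𝓣t* − W_3^l‖_F² ) ≤ Σ_{l=1}^L ( ‖𝓣(conj t) − W_1^l‖_F² + ‖𝓣t − W_3^l‖_F² ). -/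
open Matrix

/-- The Frobenius norm of a complex matrix. -/
noncomputable def frobNorm {m : Type*} [Fintype m] (M : Matrix m m ℂ) : ℝ :=
  Real.sqrt (∑ i, ∑ j, ‖M i j‖ ^ 2)

open Finset

/-- The mean minimizes the sum of squared distances. -/
lemma mean_min {ι : Type*} (s : Finset ι) (z : ι → ℂ) (m x : ℂ)
    (h : (s.card : ℂ) * m = ∑ p ∈ s, z p) :
    ∑ p ∈ s, Complex.normSq (m - z p) ≤ ∑ p ∈ s, Complex.normSq (x - z p) := by
  have hzero : ∑ p ∈ s, (m - z p) = 0 := by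
    rw [Finset.sum_sub_distrib, Finset.sum_const, ← h, nsmul_eq_mul, sub_self]
  have expand : ∑ p ∈ s, Complex.normSq (x - z p)
      = ∑ p ∈ s, Complex.normSq (m - z p) + s.card * Complex.normSq (x - m) := by
    have key : ∀ p ∈ s, Complex.normSq (x - z p)
        = Complex.normSq (x - m) + Complex.normSq (m - z p)
          + 2 * ((x - m) * (starRingEnd ℂ) (m - z p)).re := by
      intro p _
      have hx : x - z p = (x - m) + (m - z p) := by ring
      rw [hx, Complex.normSq_add]
    rw [Finset.sum_congr rfl key, Finset.sum_add_distrib, Finset.sum_add_distrib,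
      Finset.sum_const]
    have hcross : ∑ p ∈ s, 2 * ((x - m) * (starRingEnd ℂ) (m - z p)).re = 0 := by
      rw [← Finset.mul_sum, ← Complex.re_sum, ← Finset.mul_sum, ← map_sum, hzero]
      simp
    rw [hcross, nsmul_eq_mul]
    ring
  have hpos : (0:ℝ) ≤ s.card * Complex.normSq (x - m) :=
    mul_nonneg (Nat.cast_nonneg _) (Complex.normSq_nonneg _)
  linarith

lemma sum_fin_eq_one (n c : ℕ) (f : ℕ → ℂ) :
    ∑ i : Fin n, (if i.val = c then f i.val else 0) = if c < n then f c else 0 := by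
  by_cases h : c < n
  · rw [if_pos h]
    rw [Finset.sum_eq_single_of_mem (⟨c, h⟩ : Fin n) (mem_univ _)]
    · simp
    · intro b _ hb
      rw [if_neg]
      intro hc
      exact hb (Fin.ext hc)
  · rw [if_neg h]
    apply Finset.sum_eq_zero
    intro i _
    rw [if_neg]
    intro hc
    exact h (hc ▸ i.isLt)

lemma count_diag (n : ℕ) (a : ℕ) (ha : a < n) :
    ∑ i : Fin n, ∑ j : Fin n, (if i.val = j.val + a then (1:ℂ) else 0)
      = ((n - a : ℕ) : ℂ) := by
  rw [Finset.sum_comm]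
  have h1 : ∀ j : Fin n, ∑ i : Fin n, (if i.val = j.val + a then (1:ℂ) else 0)
      = if j.val + a < n then 1 else 0 := by
    intro j
    simpa using sum_fin_eq_one n (j.val + a) (fun _ => (1:ℂ))
  rw [Finset.sum_congr rfl fun j _ => h1 j]
  have h2 : ∑ j : Fin n, (if j.val + a < n then (1:ℂ) else 0)
      = ∑ j ∈ Finset.range n, (if j + a < n then (1:ℂ) else 0) :=
    Fin.sum_univ_eq_sum_range (fun j => if j + a < n then (1:ℂ) else 0) n
  rw [h2]
  have h3 : ∀ j ∈ Finset.range n, (if j + a < n then (1:ℂ) else 0)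
      = if j < n - a then 1 else 0 := by
    intro j _
    congr 1
    simp only [eq_iff_iff]
    omega
  rw [Finset.sum_congr rfl h3, Finset.sum_boole]
  have h4 : Finset.filter (fun j => j < n - a) (Finset.range n) = Finset.range (n - a) := by
    ext k; simp; omega
  rw [h4, Finset.card_range]

theorem toeplitz_multi_snapshot_projection_optimal
    (n L : ℕ) (hn : 1 ≤ n) (hL : 1 ≤ L)
    (W₁ W₃ : Fin L → Matrix (Fin n) (Fin n) ℂ)
    (hW₁ : ∀ l, (W₁ l).IsHermitian) (hW₃ : ∀ l, (W₃ l).IsHermitian)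
    (tstar : Fin n → ℂ)
    (htstar : ∀ a : Fin n,
      tstar a = ((2 * L * (n - a.val) : ℕ) : ℂ)⁻¹
        * ∑ l : Fin L, ∑ i : Fin n, ∑ j : Fin n,
            if i.val = j.val + a.val then star ((W₁ l) i j) + (W₃ l) i j else 0) :
    ∀ t : Fin n → ℂ,
      (∑ l : Fin L,
        (frobNorm (toeplitzOp n (fun j => star (tstar j)) - W₁ l) ^ 2
          + frobNorm (toeplitzOp n tstar - W₃ l) ^ 2))
      ≤ ∑ l : Fin L,
        (frobNorm (toeplitzOp n (fun j => star (t j)) - W₁ l) ^ 2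
          + frobNorm (toeplitzOp n t - W₃ l) ^ 2) := by
  intro t
  -- Frobenius norm squared as sum of normSq
  have hfrob : ∀ (M : Matrix (Fin n) (Fin n) ℂ),
      frobNorm M ^ 2 = ∑ i, ∑ j, Complex.normSq (M i j) := by
    intro M
    rw [frobNorm, Real.sq_sqrt (by positivity)]
    simp [Complex.sq_norm]
  -- diagonal-index map
  set dd : Fin n → Fin n → Fin n := fun i j =>
    ⟨max i.val j.val - min i.val j.val,
      (Nat.sub_le _ _).trans_lt (max_lt i.isLt j.isLt)⟩ with hdd
  -- target values
  set z : Fin L → Fin n → Fin n → Bool → ℂ := fun l i j b =>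
    if b then (if j.val ≤ i.val then star (W₁ l i j) else W₁ l i j)
    else (if j.val ≤ i.val then W₃ l i j else star (W₃ l i j)) with hz
  have hzsum : ∀ (l : Fin L) (i j : Fin n),
      z l i j true + z l i j false
      = if j.val ≤ i.val then star (W₁ l i j) + W₃ l i j
        else W₁ l i j + star (W₃ l i j) := by
    intro l i j
    rw [hz]
    by_cases hji : j.val ≤ i.val <;> simp [hji]
  have nstar : ∀ x w : ℂ, Complex.normSq (star x - w) = Complex.normSq (x - star w) := by
    intro x w
    have h1 : star x - w = star (x - star w) := by rw [star_sub, star_star]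
    rw [h1, Complex.star_def, Complex.normSq_conj]
  -- Step A: unfold objective
  have stepA : ∀ u : Fin n → ℂ,
      (∑ l : Fin L,
        (frobNorm (toeplitzOp n (fun j => star (u j)) - W₁ l) ^ 2
          + frobNorm (toeplitzOp n u - W₃ l) ^ 2))
      = ∑ l : Fin L, ∑ i : Fin n, ∑ j : Fin n, ∑ b : Bool,
          Complex.normSq (u (dd i j) - z l i j b) := by
    intro u
    refine Finset.sum_congr rfl fun l _ => ?_
    rw [hfrob, hfrob, ← Finset.sum_add_distrib]
    refine Finset.sum_congr rfl fun i _ => ?_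
    rw [← Finset.sum_add_distrib]
    refine Finset.sum_congr rfl fun j _ => ?_
    rw [Fintype.sum_bool]
    by_cases hij : j.val ≤ i.val
    · have hfin : ∀ (h : i.val - j.val < n), (⟨i.val - j.val, h⟩ : Fin n) = dd i j := by
        intro h
        apply Fin.ext
        simp only [hdd]
        omega
      simp only [Matrix.sub_apply, toeplitzOp, Matrix.of_apply, if_pos hij, hz, hfin]
      rw [nstar]
      simp
    · have hfin : ∀ (h : j.val - i.val < n), (⟨j.val - i.val, h⟩ : Fin n) = dd i j := by
        intro h
        apply Fin.ext
        simp only [hdd]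
        omega
      simp only [Matrix.sub_apply, toeplitzOp, Matrix.of_apply, if_neg hij, hz, hfin,
        star_star]
      rw [nstar]
      simp [add_comm]
  rw [stepA, stepA]
  -- collapse to a single sum over the product type
  have collapse : ∀ u : Fin n → ℂ,
      (∑ l : Fin L, ∑ i : Fin n, ∑ j : Fin n, ∑ b : Bool,
          Complex.normSq (u (dd i j) - z l i j b))
      = ∑ p : Fin L × Fin n × Fin n × Bool,
          Complex.normSq (u (dd p.2.1 p.2.2.1) - z p.1 p.2.1 p.2.2.1 p.2.2.2) := by
    intro u
    rw [Fintype.sum_prod_type]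
    refine Finset.sum_congr rfl fun l _ => ?_
    rw [Fintype.sum_prod_type]
    refine Finset.sum_congr rfl fun i _ => ?_
    rw [Fintype.sum_prod_type]
  rw [collapse, collapse]
  -- fiberwise decomposition
  have fib : ∀ u : Fin n → ℂ,
      (∑ p : Fin L × Fin n × Fin n × Bool,
          Complex.normSq (u (dd p.2.1 p.2.2.1) - z p.1 p.2.1 p.2.2.1 p.2.2.2))
      = ∑ a : Fin n, ∑ p ∈ Finset.univ.filter
            (fun p : Fin L × Fin n × Fin n × Bool => dd p.2.1 p.2.2.1 = a),
          Complex.normSq (u a - z p.1 p.2.1 p.2.2.1 p.2.2.2) := by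
    intro u
    rw [← Finset.sum_fiberwise Finset.univ (fun p : Fin L × Fin n × Fin n × Bool =>
      dd p.2.1 p.2.2.1) (fun p => Complex.normSq (u (dd p.2.1 p.2.2.1)
        - z p.1 p.2.1 p.2.2.1 p.2.2.2))]
    refine Finset.sum_congr rfl fun a _ => ?_
    refine Finset.sum_congr rfl fun p hp => ?_
    rw [Finset.mem_filter] at hp
    rw [hp.2]
  rw [fib, fib]
  apply Finset.sum_le_sum
  intro a _
  -- key per-diagonal facts
  have han : a.val < n := a.isLt
  set S : Finset (Fin L × Fin n × Fin n × Bool) := Finset.univ.filter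
      (fun p : Fin L × Fin n × Fin n × Bool => dd p.2.1 p.2.2.1 = a) with hS
  set Z : Fin L × Fin n × Fin n × Bool → ℂ :=
      fun p => z p.1 p.2.1 p.2.2.1 p.2.2.2 with hZ
  -- the split of the diagonal condition
  have hsplit : ∀ (i j : Fin n) (u v : ℂ),
      (if dd i j = a then (if j.val ≤ i.val then u else v) else 0)
      = (if i.val = j.val + a.val then u else 0)
        + (if i.val < j.val ∧ j.val = i.val + a.val then v else 0) := by
    intro i j u v
    have hddiff : dd i j = a ↔ max i.val j.val - min i.val j.val = a.val := by
      rw [Fin.ext_iff]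
    by_cases h1 : i.val = j.val + a.val
    · have hle : j.val ≤ i.val := by omega
      have hc : dd i j = a := hddiff.mpr (by omega)
      have h2 : ¬(i.val < j.val ∧ j.val = i.val + a.val) := by omega
      rw [if_pos hc, if_pos hle, if_pos h1, if_neg h2, add_zero]
    · by_cases h2 : i.val < j.val ∧ j.val = i.val + a.val
      · have hle : ¬ j.val ≤ i.val := by omega
        have hc : dd i j = a := hddiff.mpr (by omega)
        rw [if_pos hc, if_neg hle, if_neg h1, if_pos h2, zero_add]
      · have hc : ¬ dd i j = a := by
          rw [hddiff]
          omega
        rw [if_neg hc, if_neg h1, if_neg h2, add_zero]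
  -- sum over S of a function of the form (if j ≤ i then u else v), summed over bools
  have hSsum : ∀ (f : Fin L → Fin n → Fin n → Bool → ℂ),
      ∑ p ∈ S, f p.1 p.2.1 p.2.2.1 p.2.2.2
      = ∑ l : Fin L, ∑ i : Fin n, ∑ j : Fin n,
          (if dd i j = a then (f l i j true + f l i j false) else 0) := by
    intro f
    rw [hS, Finset.sum_filter, Fintype.sum_prod_type]
    refine Finset.sum_congr rfl fun l _ => ?_
    rw [Fintype.sum_prod_type]
    refine Finset.sum_congr rfl fun i _ => ?_
    rw [Fintype.sum_prod_type]
    refine Finset.sum_congr rfl fun j _ => ?_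
    rw [Fintype.sum_bool]
    split_ifs <;> simp
  -- abbreviation for the main diagonal sum
  set Sa : ℂ := ∑ l : Fin L, ∑ i : Fin n, ∑ j : Fin n,
      (if i.val = j.val + a.val then star ((W₁ l) i j) + (W₃ l) i j else 0) with hSa
  -- second-triangle sum identity
  have hsecond : ∑ l : Fin L, ∑ i : Fin n, ∑ j : Fin n,
      (if i.val < j.val ∧ j.val = i.val + a.val
        then W₁ l i j + star ((W₃ l) i j) else 0)
      = if a.val = 0 then 0 else Sa := by
    by_cases ha0 : a.val = 0
    · rw [if_pos ha0]
      refine Finset.sum_eq_zero fun l _ => Finset.sum_eq_zero fun i _ =>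
        Finset.sum_eq_zero fun j _ => ?_
      rw [if_neg]
      omega
    · rw [if_neg ha0, hSa]
      refine Finset.sum_congr rfl fun l _ => ?_
      rw [Finset.sum_comm]
      refine Finset.sum_congr rfl fun x _ => Finset.sum_congr rfl fun y _ => ?_
      by_cases hc : x.val = y.val + a.val
      · have hc' : y.val < x.val ∧ x.val = y.val + a.val := by omega
        rw [if_pos hc', if_pos hc, (hW₁ l).apply, ← (hW₃ l).apply, star_star]
      · have hc' : ¬(y.val < x.val ∧ x.val = y.val + a.val) := by omega
        rw [if_neg hc', if_neg hc]
  -- counting in each triangle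
  have hcount1 : ∑ l : Fin L, ∑ i : Fin n, ∑ j : Fin n,
      (if i.val = j.val + a.val then (1:ℂ) else 0) = (L : ℂ) * ((n - a.val : ℕ) : ℂ) := by
    rw [Finset.sum_congr rfl fun l _ => count_diag n a.val han, Finset.sum_const]
    simp [mul_comm]
  have hcount2 : ∑ l : Fin L, ∑ i : Fin n, ∑ j : Fin n,
      (if i.val < j.val ∧ j.val = i.val + a.val then (1:ℂ) else 0)
      = if a.val = 0 then 0 else (L : ℂ) * ((n - a.val : ℕ) : ℂ) := by
    by_cases ha0 : a.val = 0
    · rw [if_pos ha0]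
      refine Finset.sum_eq_zero fun l _ => Finset.sum_eq_zero fun i _ =>
        Finset.sum_eq_zero fun j _ => ?_
      rw [if_neg]
      omega
    · rw [if_neg ha0, ← hcount1]
      refine Finset.sum_congr rfl fun l _ => ?_
      rw [Finset.sum_comm]
      refine Finset.sum_congr rfl fun x _ => Finset.sum_congr rfl fun y _ => ?_
      congr 1
      simp only [eq_iff_iff]
      omega
  -- cardinality of S
  have hk : ∀ u v : ℂ, ∑ l : Fin L, ∑ i : Fin n, ∑ j : Fin n,
      (if dd i j = a then (if j.val ≤ i.val then u else v) else 0)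
      = u * (∑ l : Fin L, ∑ i : Fin n, ∑ j : Fin n,
          (if i.val = j.val + a.val then (1:ℂ) else 0))
        + v * (∑ l : Fin L, ∑ i : Fin n, ∑ j : Fin n,
          (if i.val < j.val ∧ j.val = i.val + a.val then (1:ℂ) else 0)) := by
    intro u v
    simp only [Finset.mul_sum]
    rw [← Finset.sum_add_distrib]
    refine Finset.sum_congr rfl fun l _ => ?_
    rw [← Finset.sum_add_distrib]
    refine Finset.sum_congr rfl fun i _ => ?_
    rw [← Finset.sum_add_distrib]
    refine Finset.sum_congr rfl fun j _ => ?_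
    rw [hsplit]
    split_ifs <;> ring
  have hcard : ((S.card : ℕ) : ℂ)
      = 2 * ((L : ℂ) * ((n - a.val : ℕ) : ℂ))
        + 2 * (if a.val = 0 then 0 else (L : ℂ) * ((n - a.val : ℕ) : ℂ)) := by
    have h1 : ((S.card : ℕ) : ℂ) = ∑ p ∈ S, (1:ℂ) := by
      rw [Finset.sum_const]
      simp
    rw [h1, hSsum (fun _ _ _ _ => (1:ℂ))]
    have h2 : ∀ (i j : Fin n), (if dd i j = a then (1:ℂ) + 1 else 0)
        = if dd i j = a then (if j.val ≤ i.val then (2:ℂ) else 2) else 0 := by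
      intro i j
      split_ifs <;> norm_num
    rw [Finset.sum_congr rfl fun l _ => Finset.sum_congr rfl fun i _ =>
      Finset.sum_congr rfl fun j _ => h2 i j]
    rw [hk 2 2, hcount1, hcount2]
  -- sum of Z over S
  have hZsum : ∑ p ∈ S, Z p = Sa + (if a.val = 0 then 0 else Sa) := by
    rw [hZ, hSsum z]
    have h2 : ∀ (l : Fin L) (i j : Fin n), (if dd i j = a then z l i j true + z l i j false else 0)
        = if dd i j = a then (if j.val ≤ i.val
            then star (W₁ l i j) + W₃ l i j else W₁ l i j + star (W₃ l i j)) else 0 := by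
      intro l i j
      rw [hzsum]
    rw [Finset.sum_congr rfl fun l _ => Finset.sum_congr rfl fun i _ =>
      Finset.sum_congr rfl fun j _ => h2 l i j]
    have h3 : ∀ (l : Fin L) (i j : Fin n),
        (if dd i j = a then (if j.val ≤ i.val
            then star (W₁ l i j) + W₃ l i j else W₁ l i j + star (W₃ l i j)) else 0)
        = (if i.val = j.val + a.val then star (W₁ l i j) + W₃ l i j else 0)
          + (if i.val < j.val ∧ j.val = i.val + a.val
              then W₁ l i j + star (W₃ l i j) else 0) := by
      intro l i j
      exact hsplit i j _ _
    rw [Finset.sum_congr rfl fun l _ => Finset.sum_congr rfl fun i _ =>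
      Finset.sum_congr rfl fun j _ => h3 l i j]
    simp only [Finset.sum_add_distrib]
    rw [hsecond, hSa]
  -- the mean property
  have hD : ((2 * L * (n - a.val) : ℕ) : ℂ) ≠ 0 := by
    have : (2 * L * (n - a.val) : ℕ) ≠ 0 := by
      have : 0 < n - a.val := by omega
      positivity
    exact_mod_cast this
  have hmean0 : ((2 * L * (n - a.val) : ℕ) : ℂ) * tstar a = Sa := by
    rw [htstar a, ← hSa, ← mul_assoc, mul_inv_cancel₀ hD, one_mul]
  have hD' : ((2 * L * (n - a.val) : ℕ) : ℂ) = 2 * ((L : ℂ) * ((n - a.val : ℕ) : ℂ)) := by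
    push_cast
    ring
  have hmean : ((S.card : ℕ) : ℂ) * tstar a = ∑ p ∈ S, Z p := by
    rw [hcard, hZsum]
    by_cases ha0 : a.val = 0
    · rw [if_pos ha0, if_pos ha0, mul_zero, add_zero, add_zero, ← hD', hmean0]
    · rw [if_neg ha0, if_neg ha0, ← hD', ← hmean0]
      ring
  exact mean_min S Z (tstar a) (t a) hmean
end

section
/- Let K ≥ K' ≥ 1, let b ∈ ℝ^{K'} with b_k > 0 for all k, and let S ∈ ℂ^{K'} with |S_k| ≤ b_k for all k. If the 2K'×2K' block matrix [[diag(b), diag(conj(S))],[diag(S), diag(b)]] has rank at most K, then the number of indices k with |S_k| < b_k is at most min(K', K − K'). -/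
open Matrix
open scoped ComplexOrder

theorem block_diag_rank_le_card_lt
    (K K' : ℕ) (hK' : 1 ≤ K') (hK : K' ≤ K)
    (b : Fin K' → ℝ) (hb : ∀ k, 0 < b k)
    (S : Fin K' → ℂ) (hS : ∀ k, ‖S k‖ ≤ b k)
    (hrank : (Matrix.fromBlocks
      (Matrix.diagonal fun k => (b k : ℂ))
      (Matrix.diagonal fun k => star (S k))
      (Matrix.diagonal S)
      (Matrix.diagonal fun k => (b k : ℂ))).rank ≤ K) :
    (Finset.univ.filter fun k => ‖S k‖ < b k).card ≤ min K' (K - K') := by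
  classical
  set M : Matrix (Fin K' ⊕ Fin K') (Fin K' ⊕ Fin K') ℂ :=
    Matrix.fromBlocks
      (Matrix.diagonal fun k => (b k : ℂ))
      (Matrix.diagonal fun k => star (S k))
      (Matrix.diagonal S)
      (Matrix.diagonal fun k => (b k : ℂ)) with hM
  set T : Finset (Fin K') := Finset.univ.filter fun k => ‖S k‖ < b k with hT
  let f : (Fin K' ⊕ {x // x ∈ T}) → (Fin K' ⊕ Fin K') :=
    Sum.elim Sum.inl (fun t => Sum.inr t.1)
  let v : (Fin K' ⊕ {x // x ∈ T}) → ((Fin K' ⊕ Fin K') → ℂ) :=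
    fun j => fun i => M i (f j)
  have hmem : ∀ j, v j ∈ LinearMap.range M.mulVecLin := by
    intro j
    refine ⟨Pi.single (f j) 1, ?_⟩
    simp [Matrix.mulVecLin_apply, Matrix.mulVec_single, v]
    rfl
  have hTmem : ∀ k, k ∈ T ↔ ‖S k‖ < b k := by
    intro k; simp [hT]
  have hbne : ∀ k, (b k : ℂ) ≠ 0 := by
    intro k
    exact_mod_cast (hb k).ne'
  have hkey : ∀ k, k ∈ T → ((b k : ℂ) * (b k : ℂ) - star (S k) * S k) ≠ 0 := by
    intro k hk
    have habs : ‖S k‖ < b k := (hTmem k).1 hk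
    have h1 : star (S k) * S k = ((‖S k‖)^2 : ℝ) := by
      rw [Complex.star_def, ← Complex.normSq_eq_conj_mul_self, Complex.sq_norm]
    have h2 : ((b k : ℂ))*(b k : ℂ) = (((b k)^2 : ℝ) : ℂ) := by push_cast; ring
    rw [h1, h2]
    intro hcon
    rw [sub_eq_zero] at hcon
    have h3 : (b k)^2 = (‖S k‖)^2 := Complex.ofReal_injective hcon
    have h0 : (0:ℝ) ≤ ‖S k‖ := norm_nonneg _
    nlinarith
  have hindep : LinearIndependent ℂ v := by
    rw [Fintype.linearIndependent_iff]
    intro g hg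
    have heval : ∀ i, (∑ j, g j • v j) i = 0 := by
      intro i; rw [hg]; rfl
    have hcoord : ∀ i, (∑ k, g (Sum.inl k) * M i (Sum.inl k))
        + (∑ t ∈ T.attach, g (Sum.inr t) * M i (Sum.inr t.1)) = 0 := by
      intro i
      have := heval i
      simpa [v, f, Finset.sum_apply, Fintype.sum_sum_type, smul_eq_mul] using this
    have hsub : ∀ (c : Fin K' → ℂ) (k : Fin K'),
        (∑ t ∈ T.attach, g (Sum.inr t) * Matrix.diagonal c k t.1)
          = if h : k ∈ T then g (Sum.inr ⟨k, h⟩) * c k else 0 := by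
      intro c k
      by_cases h : k ∈ T
      · rw [dif_pos h]
        rw [Finset.sum_eq_single (⟨k, h⟩ : {x // x ∈ T})]
        · simp [Matrix.diagonal_apply_eq]
        · intro t _ ht
          have hne : k ≠ t.1 := by
            intro he
            exact ht (Subtype.ext he.symm)
          simp [Matrix.diagonal_apply_ne _ hne]
        · intro habs; exact absurd (Finset.mem_attach _ _) habs
      · rw [dif_neg h]
        apply Finset.sum_eq_zero
        intro t _
        have hne : k ≠ t.1 := fun he => h (he ▸ t.2)
        simp [Matrix.diagonal_apply_ne _ hne]
    have hdiag : ∀ (c : Fin K' → ℂ) (k : Fin K'),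
        (∑ k', g (Sum.inl k') * Matrix.diagonal c k k') = g (Sum.inl k) * c k := by
      intro c k
      simp [Matrix.diagonal_apply, mul_ite, Finset.sum_ite_eq]
    have eq1 : ∀ k, g (Sum.inl k) * (b k : ℂ)
        + (if h : k ∈ T then g (Sum.inr ⟨k, h⟩) * star (S k) else 0) = 0 := by
      intro k
      have h := hcoord (Sum.inl k)
      rw [hM] at h
      simp only [Matrix.fromBlocks_apply₁₁, Matrix.fromBlocks_apply₁₂] at h
      rwa [hdiag, hsub] at h
    have eq2 : ∀ k, g (Sum.inl k) * (S k)
        + (if h : k ∈ T then g (Sum.inr ⟨k, h⟩) * (b k : ℂ) else 0) = 0 := by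
      intro k
      have h := hcoord (Sum.inr k)
      rw [hM] at h
      simp only [Matrix.fromBlocks_apply₂₁, Matrix.fromBlocks_apply₂₂] at h
      rwa [hdiag, hsub] at h
    have hg1 : ∀ k, g (Sum.inl k) = 0 := by
      intro k
      by_cases h : k ∈ T
      · have e1 := eq1 k; have e2 := eq2 k
        rw [dif_pos h] at e1 e2
        have hmul : g (Sum.inl k) * ((b k : ℂ) * (b k : ℂ) - star (S k) * S k) = 0 := by
          have : g (Sum.inl k) * ((b k : ℂ) * (b k : ℂ) - star (S k) * S k)
              = (b k : ℂ) * (g (Sum.inl k) * (b k : ℂ) + g (Sum.inr ⟨k, h⟩) * star (S k))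
                - star (S k) * (g (Sum.inl k) * S k + g (Sum.inr ⟨k, h⟩) * (b k : ℂ)) := by
            ring
          rw [this, e1, e2]; ring
        exact (mul_eq_zero.1 hmul).resolve_right (hkey k h)
      · have e1 := eq1 k
        rw [dif_neg h, add_zero] at e1
        exact (mul_eq_zero.1 e1).resolve_right (hbne k)
    have hg2 : ∀ t : {x // x ∈ T}, g (Sum.inr t) = 0 := by
      intro t
      have e2 := eq2 t.1
      rw [dif_pos t.2, hg1 t.1, zero_mul, zero_add, Subtype.coe_eta] at e2
      exact (mul_eq_zero.1 e2).resolve_right (hbne t.1)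
    intro j
    cases j with
    | inl k => exact hg1 k
    | inr t => exact hg2 t
  -- conclude: rank ≥ K' + T.card
  have h1 : Module.finrank ℂ (Submodule.span ℂ (Set.range v))
      = Fintype.card (Fin K' ⊕ {x // x ∈ T}) := finrank_span_eq_card hindep
  have h2 : Submodule.span ℂ (Set.range v) ≤ LinearMap.range M.mulVecLin :=
    Submodule.span_le.2 (Set.range_subset_iff.2 hmem)
  have h3 := Submodule.finrank_mono h2
  rw [h1] at h3
  have h4 : K' + T.card ≤ M.rank := by
    simpa [Matrix.rank, Fintype.card_sum, Fintype.card_coe] using h3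
  have h5 : K' + T.card ≤ K := h4.trans hrank
  have h6 : T.card ≤ K' := by
    calc T.card ≤ Finset.univ.card := Finset.card_filter_le _ _
    _ = K' := by simp
  exact Nat.le_min.2 ⟨h6, by omega⟩
end
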